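/- The Even predicate cannot be decided by a single-valued positive existential relation stable under ℕ*: if B(x,y) is a positive existential formula with ℕ ⊨ B(a, Even(a)) for all a ∈ ℕ (where Even(a) ∈ {0,1} is 1 iff a is even) and the uniqueness B(x,u) ∧ B(x,v) → u = v holds in ℕ*, then a contradiction follows, since both {a : Even(a) = 1} and its complement are infinite, so by overspill ℕ* ⊨ B(∞,0) and ℕ* ⊨ B(∞,1). -/

import Mathlib

/-- Terms in the language {0, S, +, ·} with variables from `Fin n`. -/
inductive PTerm : ℕ → Type
  | var : ∀ {n}, Fin n → PTerm n
  | zero : ∀ {n}, PTerm n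
  | succ : ∀ {n}, PTerm n → PTerm n
  | add : ∀ {n}, PTerm n → PTerm n → PTerm n
  | mul : ∀ {n}, PTerm n → PTerm n → PTerm n

/-- Evaluation of a term in a structure with 0, 1 (for successor `x + 1`), + and ·. -/
def PTerm.eval {α : Type*} [Zero α] [One α] [Add α] [Mul α] :
    ∀ {n}, PTerm n → (Fin n → α) → α
  | _, .var i, v => v i
  | _, .zero, _ => 0
  | _, .succ t, v => t.eval v + 1
  | _, .add s t, v => s.eval v + t.eval v
  | _, .mul s t, v => s.eval v * t.eval v

/-- Positive existential formulas: built from equalities of terms by ∧, ∨, ∃. -/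
inductive PForm : ℕ → Type
  | eq : ∀ {n}, PTerm n → PTerm n → PForm n
  | and : ∀ {n}, PForm n → PForm n → PForm n
  | or : ∀ {n}, PForm n → PForm n → PForm n
  | ex : ∀ {n}, PForm (n + 1) → PForm n

/-- Classical satisfaction of a positive existential formula in a structure. -/
def PForm.Holds {α : Type*} [Zero α] [One α] [Add α] [Mul α] :
    ∀ {n}, PForm n → (Fin n → α) → Prop
  | _, .eq s t, v => s.eval v = t.eval v
  | _, .and φ ψ, v => φ.Holds v ∧ ψ.Holds v
  | _, .or φ ψ, v => φ.Holds v ∨ ψ.Holds v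
  | _, .ex φ, v => ∃ a : α, φ.Holds (Fin.cons a v)



open Filter Topology

/-- Casting a ℕ-valuation to ℕ∞ commutes with term evaluation. -/
lemma pterm_eval_cast : ∀ {n} (t : PTerm n) (v : Fin n → ℕ),
    t.eval (fun i => (v i : ℕ∞)) = ((t.eval v : ℕ) : ℕ∞)
  | _, .var i, v => by simp [PTerm.eval]

  | _, .zero, v => by simp [PTerm.eval]
  | _, .succ t, v => by simp [PTerm.eval, pterm_eval_cast t v]
  | _, .add s t, v => by simp [PTerm.eval, pterm_eval_cast s v, pterm_eval_cast t v]
  | _, .mul s t, v => by simp [PTerm.eval, pterm_eval_cast s v, pterm_eval_cast t v]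

/-- Positive formulas transfer along the embedding ℕ → ℕ∞. -/
lemma pform_holds_cast : ∀ {n} (φ : PForm n) (v : Fin n → ℕ),
    φ.Holds v → φ.Holds (fun i => (v i : ℕ∞))
  | _, .eq s t, v, h => by
      simp only [PForm.Holds] at h ⊢
      rw [pterm_eval_cast, pterm_eval_cast, h]
  | _, .and φ ψ, v, h => ⟨pform_holds_cast φ v h.1, pform_holds_cast ψ v h.2⟩
  | _, .or φ ψ, v, h =>
      h.elim (fun h => Or.inl (pform_holds_cast φ v h))
        (fun h => Or.inr (pform_holds_cast ψ v h))
  | _, .ex φ, v, h => by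
      obtain ⟨a, ha⟩ : ∃ a : ℕ, φ.Holds (Fin.cons a v) := h
      show ∃ x : ℕ∞, φ.Holds (Fin.cons x fun i => ((v i : ℕ) : ℕ∞))
      refine ⟨(a : ℕ∞), ?_⟩
      have := pform_holds_cast φ (Fin.cons a v) ha
      convert this using 1
      ext i
      refine Fin.cases ?_ ?_ i <;> simp

/-- Term evaluation is continuous in the valuation (along a filter). -/
lemma pterm_eval_tendsto {ι : Type} {L : Filter ι} :
    ∀ {n} (t : PTerm n) (w : ι → Fin n → ℕ∞) (v : Fin n → ℕ∞),
    (∀ j, Tendsto (fun k => w k j) L (𝓝 (v j))) →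
    Tendsto (fun k => t.eval (w k)) L (𝓝 (t.eval v))
  | _, .var i, w, v, hw => by simpa [PTerm.eval] using hw i
  | _, .zero, w, v, hw => by simpa [PTerm.eval] using (tendsto_const_nhds : Tendsto (fun _ : ι => (0:ℕ∞)) L _)
  | _, .succ t, w, v, hw => by
      simpa [PTerm.eval] using (pterm_eval_tendsto t w v hw).add tendsto_const_nhds
  | _, .add s t, w, v, hw => by
      simpa [PTerm.eval] using (pterm_eval_tendsto s w v hw).add (pterm_eval_tendsto t w v hw)
  | _, .mul s t, w, v, hw => by
      simpa [PTerm.eval] using (pterm_eval_tendsto s w v hw).mul (pterm_eval_tendsto t w v hw)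

/-- Overspill / limit lemma: positive existential formulas are closed under limits
of valuations in the compact space ℕ∞. -/
lemma pform_holds_limit : ∀ {n} (φ : PForm n) {ι : Type} (L : Filter ι) (_ : L.NeBot)
    (w : ι → Fin n → ℕ∞) (v : Fin n → ℕ∞),
    (∀ j, Tendsto (fun k => w k j) L (𝓝 (v j))) →
    (∀ᶠ k in L, φ.Holds (w k)) → φ.Holds v
  | _, .eq s t, ι, L, hL, w, v, hw, hh => by
      have hs := pterm_eval_tendsto s w v hw
      have ht := pterm_eval_tendsto t w v hw
      have : Tendsto (fun k => PTerm.eval s (w k)) L (𝓝 (t.eval v)) :=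
        ht.congr' (by filter_upwards [hh] with k hk using hk.symm)
      exact tendsto_nhds_unique hs this
  | _, .and φ ψ, ι, L, hL, w, v, hw, hh =>
      ⟨pform_holds_limit φ L hL w v hw (hh.mono fun k h => h.1),
       pform_holds_limit ψ L hL w v hw (hh.mono fun k h => h.2)⟩
  | _, .or φ ψ, ι, L, hL, w, v, hw, hh => by
      have : (∃ᶠ k in L, φ.Holds (w k)) ∨ (∃ᶠ k in L, ψ.Holds (w k)) := by
        by_contra hc
        push_neg at hc
        have := (hh.and hc.1).and hc.2
        rcases this.exists with ⟨k, ⟨hk1 | hk1, hk2⟩, hk3⟩ <;> [exact hk2 hk1; exact hk3 hk1]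
      rcases this with h | h
      · have hne : (L ⊓ 𝓟 {k | PForm.Holds φ (w k)}).NeBot := by
          rwa [← Filter.frequently_iff_neBot] at *
        exact Or.inl (pform_holds_limit φ _ hne w v
          (fun j => (hw j).mono_left inf_le_left)
          (Filter.eventually_inf_principal.2 (Filter.Eventually.of_forall fun k hk => hk)))
      · have hne : (L ⊓ 𝓟 {k | PForm.Holds ψ (w k)}).NeBot := by
          rwa [← Filter.frequently_iff_neBot] at *
        exact Or.inr (pform_holds_limit ψ _ hne w v
          (fun j => (hw j).mono_left inf_le_left)
          (Filter.eventually_inf_principal.2 (Filter.Eventually.of_forall fun k hk => hk)))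
  | _, .ex φ, ι, L, hL, w, v, hw, hh => by
      classical
      replace hh : ∀ᶠ k in L, ∃ x : ℕ∞, φ.Holds (Fin.cons x (w k)) := hh
      -- choose witnesses
      set a : ι → ℕ∞ := fun k =>
        if h : ∃ x : ℕ∞, φ.Holds (Fin.cons x (w k)) then h.choose else 0 with ha
      have haw : ∀ᶠ k in L, φ.Holds (Fin.cons (a k) (w k)) := by
        filter_upwards [hh] with k hk
        simp only [ha]
        rw [dif_pos hk]
        exact hk.choose_spec
      -- cluster point by compactness
      obtain ⟨x, hx⟩ := exists_clusterPt_of_compactSpace (Filter.map a L)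
      have hne : (L ⊓ Filter.comap a (𝓝 x)).NeBot := by
        rw [← Filter.map_neBot_iff a, Filter.push_pull]
        rw [ClusterPt] at hx
        rwa [inf_comm]
      show ∃ y : ℕ∞, φ.Holds (Fin.cons y v)
      refine ⟨x, pform_holds_limit φ (L ⊓ Filter.comap a (𝓝 x)) hne
        (fun k => Fin.cons (a k) (w k)) (Fin.cons x v) ?_ (haw.filter_mono inf_le_left)⟩
      intro j
      refine Fin.cases ?_ ?_ j
      · simpa using tendsto_comap.mono_left inf_le_right
      · intro i
        simpa using (hw i).mono_left inf_le_left

/-- The Even predicate cannot be decided by a single-valued positive existential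
relation stable under ℕ*: if B(x,y) is positive existential, ℕ ⊨ B(a, Even(a))
for all a (with Even(a) ∈ {0,1}), and uniqueness `B(x,u) ∧ B(x,v) → u = v`
holds in ℕ* = ℕ∞, then a contradiction follows. -/
theorem stmt_18 (B : PForm 2)
    (hdef : ∀ a : ℕ, B.Holds (α := ℕ) ![a, if Even a then 1 else 0])
    (huniq : ∀ x u v : ℕ∞, B.Holds ![x, u] → B.Holds ![x, v] → u = v) :
    False := by
  have key : ∀ (f : ℕ → ℕ) (e : ℕ), (∀ k, B.Holds (α := ℕ) ![f k, e]) →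
      Filter.Tendsto (fun k => ((f k : ℕ) : ℕ∞)) Filter.atTop (𝓝 ⊤) →
      B.Holds (α := ℕ∞) ![⊤, (e : ℕ∞)] := by
    intro f e hf htop
    have := pform_holds_limit B Filter.atTop Filter.atTop_neBot
      (fun k => fun i => ((![f k, e] : Fin 2 → ℕ) i : ℕ∞)) ![⊤, (e : ℕ∞)] ?_ ?_
    · exact this
    · intro j
      refine Fin.cases ?_ ?_ j
      · simpa using htop
      · intro i
        fin_cases i
        simpa using tendsto_const_nhds
    · exact Filter.Eventually.of_forall fun k => pform_holds_cast B ![f k, e] (hf k)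
  have h0 : B.Holds (α := ℕ∞) ![⊤, (0 : ℕ∞)] := by
    have := key (fun k => 2 * k + 1) 0 (fun k => by
      have := hdef (2 * k + 1)
      simpa [Nat.even_add_one, parity_simps] using this) ?_
    · simpa using this
    · rw [ENat.tendsto_nhds_top_iff_natCast_lt]
      intro n
      filter_upwards [Filter.eventually_gt_atTop n] with a ha
      exact_mod_cast by omega
  have h1 : B.Holds (α := ℕ∞) ![⊤, (1 : ℕ∞)] := by
    have := key (fun k => 2 * k) 1 (fun k => by
      have := hdef (2 * k)
      simpa [parity_simps] using this) ?_
    · simpa using this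
    · rw [ENat.tendsto_nhds_top_iff_natCast_lt]
      intro n
      filter_upwards [Filter.eventually_gt_atTop n] with a ha
      exact_mod_cast by omega
  have := huniq ⊤ 0 1 h0 h1
  simp at this
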